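/- Suppose ∇f is L₁-Lipschitz on E with L₁ > 0, the Hessian map x ↦ ∇²f(x) is L₂-Lipschitz in operator norm with L₂ > 0, the Luo–Tseng error bound holds, the IRPN iteration hypotheses hold, and ρ ∈ [0,1). Then there exists an integer k₀ ≥ 0 such that α_k = 1 for all k ≥ k₀. -/

import Mathlib

open Filter
open scoped RealInnerProductSpace

abbrev E (n : ℕ) := EuclideanSpace ℝ (Fin n)

section helpers
variable {n : ℕ}

lemma line_hasDerivAt (x w : E n) (t₀ : ℝ) :
    HasDerivAt (fun t : ℝ => x + t • w) w t₀ := by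
  simpa using ((hasDerivAt_id t₀).smul_const w).const_add x

lemma comp_line_hasDerivAt {φ : E n → ℝ} {D : E n →L[ℝ] ℝ} (x w : E n)
    (h : HasFDerivAt φ D x) : HasDerivAt (fun t : ℝ => φ (x + t • w)) (D w) 0 := by
  have hx : x + (0:ℝ) • w = x := by simp
  have h' : HasFDerivAt φ D (x + (0:ℝ) • w) := by rw [hx]; exact h
  simpa [Function.comp_def] using h'.comp_hasDerivAt 0 (line_hasDerivAt x w 0)

lemma dir_slope_tendsto {f : E n → ℝ} {G x : E n} (h : HasGradientAt f G x) (w : E n) :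
    Tendsto (fun t : ℝ => (f (x + t • w) - f x) / t) (nhdsWithin 0 (Set.Ioi 0)) (nhds ⟪G, w⟫) := by
  have hcomp : HasDerivAt (fun t : ℝ => f (x + t • w)) ⟪G, w⟫ 0 := by
    simpa [InnerProductSpace.toDual_apply_apply] using comp_line_hasDerivAt x w h.hasFDerivAt
  have := hasDerivAt_iff_tendsto_slope.1 hcomp
  have h2 := this.mono_left (nhdsWithin_mono (0:ℝ) (fun t ht => ne_of_gt ht))
  refine h2.congr (fun t => ?_)
  simp [slope_def_field, div_eq_inv_mul]

lemma grad_convex_le {f : E n → ℝ} (hf : ConvexOn ℝ Set.univ f) {G x : E n}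
    (h : HasGradientAt f G x) (y : E n) : f x + ⟪G, y - x⟫ ≤ f y := by
  have key : ⟪G, y - x⟫ ≤ f y - f x := by
    refine le_of_tendsto (dir_slope_tendsto h (y - x)) ?_
    filter_upwards [Ioc_mem_nhdsGT_of_mem (⟨le_refl (0:ℝ), zero_lt_one⟩ : (0:ℝ) ∈ Set.Ico 0 1)]
      with t ht
    have hcvx := hf.2 (Set.mem_univ x) (Set.mem_univ y) (by linarith [ht.2] : (0:ℝ) ≤ 1 - t)
      (le_of_lt ht.1) (by ring)
    have hpt : (1 - t) • x + t • y = x + t • (y - x) := by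
      rw [smul_sub, sub_smul]; module
    rw [hpt, smul_eq_mul, smul_eq_mul] at hcvx
    rw [div_le_iff₀ ht.1]
    nlinarith [hcvx]
  linarith
end helpers

section helpers2
variable {n : ℕ}

lemma grad_mono {f : E n → ℝ} (hf : ConvexOn ℝ Set.univ f) {f' : E n → E n}
    (hgrad : ∀ x, HasGradientAt f (f' x) x) (x y : E n) :
    0 ≤ ⟪f' y - f' x, y - x⟫ := by
  have h1 := grad_convex_le hf (hgrad x) y
  have h2 := grad_convex_le hf (hgrad y) x
  have : ⟪f' y - f' x, y - x⟫ = ⟪f' y, y - x⟫ - ⟪f' x, y - x⟫ := by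
    rw [inner_sub_left]
  rw [this]
  have h3 : ⟪f' y, x - y⟫ = -⟪f' y, y - x⟫ := by
    rw [← inner_neg_right]; congr 1; abel
  linarith [h2, h3 ▸ h2]

lemma hess_psd {f : E n → ℝ} (hf : ConvexOn ℝ Set.univ f) {f' : E n → E n}
    (hgrad : ∀ x, HasGradientAt f (f' x) x) {hess : E n → E n →L[ℝ] E n}
    (hhess : ∀ x, HasFDerivAt f' (hess x) x) (x u : E n) :
    0 ≤ ⟪hess x u, u⟫ := by
  have hline : HasDerivAt (fun t : ℝ => f' (x + t • u)) (hess x u) 0 := by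
    have hx : x + (0:ℝ) • u = x := by simp
    have h' : HasFDerivAt f' (hess x) (x + (0:ℝ) • u) := by rw [hx]; exact hhess x
    simpa [Function.comp_def] using h'.comp_hasDerivAt 0 (line_hasDerivAt x u 0)
  have hψ : HasDerivAt (fun t : ℝ => ⟪u, f' (x + t • u)⟫) ⟪u, hess x u⟫ 0 := by
    have := (innerSL ℝ u).hasFDerivAt.comp_hasDerivAt 0 hline
    simpa [Function.comp_def] using this
  have hslope := hasDerivAt_iff_tendsto_slope.1 hψ
  have h2 : Tendsto (slope (fun t : ℝ => ⟪u, f' (x + t • u)⟫) 0) (nhdsWithin 0 (Set.Ioi 0))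
      (nhds ⟪u, hess x u⟫) :=
    hslope.mono_left (nhdsWithin_mono (0:ℝ) (fun t (ht : t ∈ Set.Ioi (0:ℝ)) => ne_of_gt ht))
  have hval : 0 ≤ ⟪u, hess x u⟫ := by
    refine ge_of_tendsto h2 ?_
    filter_upwards [self_mem_nhdsWithin] with t (ht : t ∈ Set.Ioi (0:ℝ))
    have hm := grad_mono hf hgrad x (x + t • u)
    have heq : (x + t • u) - x = t • u := by abel
    rw [heq, real_inner_smul_right] at hm
    have htpos : (0:ℝ) < t := ht
    have hinner : 0 ≤ ⟪f' (x + t • u) - f' x, u⟫ := by nlinarith [hm, htpos]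
    have : slope (fun t : ℝ => ⟪u, f' (x + t • u)⟫) 0 t
        = t⁻¹ * ⟪u, f' (x + t • u) - f' x⟫ := by
      simp [slope_def_field, inner_sub_right, div_eq_inv_mul]
    rw [this]
    have : ⟪u, f' (x + t • u) - f' x⟫ = ⟪f' (x + t • u) - f' x, u⟫ := real_inner_comm _ _
    rw [this]
    positivity
  rw [real_inner_comm]; exact hval
end helpers2

section helpers3
variable {n : ℕ}

lemma seg_norm_le {x y z : E n} (hz : z ∈ segment ℝ x y) : ‖z - x‖ ≤ ‖y - x‖ := by
  obtain ⟨a, b, ha, hb, hab, rfl⟩ := hz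
  have hab' : a = 1 - b := by linarith
  have : a • x + b • y - x = b • (y - x) := by rw [hab']; module
  rw [this, norm_smul, Real.norm_eq_abs, abs_of_nonneg hb]
  nlinarith [norm_nonneg (y - x), hb, hab, ha]

lemma grad_taylor {f' : E n → E n} {hess : E n → E n →L[ℝ] E n}
    (hhess : ∀ x, HasFDerivAt f' (hess x) x) {L₂ : ℝ}
    (hlip2 : ∀ y z, ‖hess y - hess z‖ ≤ L₂ * ‖y - z‖) (hL₂ : 0 ≤ L₂) (x y : E n) :
    ‖f' y - f' x - hess x (y - x)‖ ≤ L₂ * ‖y - x‖ ^ 2 := by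
  set G : E n → E n := fun z => f' z - hess x z with hG
  have hder : ∀ z ∈ segment ℝ x y, HasFDerivWithinAt G (hess z - hess x) (segment ℝ x y) z :=
    fun z _ => ((hhess z).sub ((hess x).hasFDerivAt)).hasFDerivWithinAt
  have hbound : ∀ z ∈ segment ℝ x y, ‖hess z - hess x‖ ≤ L₂ * ‖y - x‖ := by
    intro z hz
    refine (hlip2 z x).trans ?_
    exact mul_le_mul_of_nonneg_left (seg_norm_le hz) hL₂
  have key := (convex_segment x y).norm_image_sub_le_of_norm_hasFDerivWithin_le hder hbound
    (left_mem_segment ℝ x y) (right_mem_segment ℝ x y)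
  have hGy : G y - G x = f' y - f' x - hess x (y - x) := by
    simp only [hG, map_sub]; abel
  rw [hGy] at key
  calc ‖f' y - f' x - hess x (y - x)‖ ≤ L₂ * ‖y - x‖ * ‖y - x‖ := key
    _ = L₂ * ‖y - x‖ ^ 2 := by ring

lemma taylor_cubic {f : E n → ℝ} {f' : E n → E n} {hess : E n → E n →L[ℝ] E n}
    (hgrad : ∀ x, HasGradientAt f (f' x) x)
    (hhess : ∀ x, HasFDerivAt f' (hess x) x) {L₂ : ℝ}
    (hlip2 : ∀ y z, ‖hess y - hess z‖ ≤ L₂ * ‖y - z‖) (hL₂ : 0 ≤ L₂) (x w : E n) :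
    f (x + w) ≤ f x + ⟪f' x, w⟫ + (1/2) * ⟪hess x w, w⟫ + L₂ * ‖w‖ ^ 3 := by
  set φ : ℝ → ℝ := fun t => f (x + t • w) - t * ⟪f' x, w⟫ - (t^2/2) * ⟪hess x w, w⟫ with hφ
  set ψ : ℝ → ℝ := fun t => ⟪f' (x + t • w), w⟫ - ⟪f' x, w⟫ - t * ⟪hess x w, w⟫ with hψ
  have hder : ∀ t ∈ Set.Icc (0:ℝ) 1, HasDerivWithinAt φ (ψ t) (Set.Icc (0:ℝ) 1) t := by
    intro t _
    have h1 : HasDerivAt (fun s : ℝ => f (x + s • w)) ⟪f' (x + t • w), w⟫ t := by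
      have := (hgrad (x + t • w)).hasFDerivAt.comp_hasDerivAt t (line_hasDerivAt x w t)
      simpa [InnerProductSpace.toDual_apply_apply, Function.comp_def] using this
    have h2 : HasDerivAt (fun s : ℝ => s * ⟪f' x, w⟫) ⟪f' x, w⟫ t := by
      simpa using (hasDerivAt_id t).mul_const ⟪f' x, w⟫
    have h3 : HasDerivAt (fun s : ℝ => (s^2/2) * ⟪hess x w, w⟫) (t * ⟪hess x w, w⟫) t := by
      have : HasDerivAt (fun s : ℝ => s^2/2) t t := by
        simpa using ((hasDerivAt_pow 2 t).div_const 2)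
      simpa using this.mul_const ⟪hess x w, w⟫
    exact ((h1.sub h2).sub h3).hasDerivWithinAt
  have hbound : ∀ t ∈ Set.Icc (0:ℝ) 1, ‖ψ t‖ ≤ L₂ * ‖w‖ ^ 3 := by
    intro t ht
    have heq : ψ t = ⟪f' (x + t • w) - f' x - hess x (t • w), w⟫ := by
      rw [hψ]
      simp only [inner_sub_left, map_smul, real_inner_smul_left]
    have hT := grad_taylor hhess hlip2 hL₂ x (x + t • w)
    have hyx : (x + t • w) - x = t • w := by abel
    rw [hyx] at hT
    rw [heq, Real.norm_eq_abs]
    have hCS := abs_real_inner_le_norm (f' (x + t • w) - f' x - hess x (t • w)) w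
    have hnt : ‖t • w‖ ^ 2 ≤ ‖w‖ ^ 2 := by
      rw [norm_smul, Real.norm_eq_abs, abs_of_nonneg ht.1]
      have h1 : t * ‖w‖ ≤ ‖w‖ := by nlinarith [norm_nonneg w, ht.1, ht.2]
      have h0 : (0:ℝ) ≤ t * ‖w‖ := mul_nonneg ht.1 (norm_nonneg w)
      nlinarith
    nlinarith [norm_nonneg w, norm_nonneg (f' (x + t • w) - f' x - hess x (t • w)), hCS, hT,
      mul_le_mul_of_nonneg_right (mul_le_mul_of_nonneg_left hnt hL₂) (norm_nonneg w)]
  have key := (convex_Icc (0:ℝ) 1).norm_image_sub_le_of_norm_hasDerivWithin_le hder hbound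
    (Set.left_mem_Icc.2 zero_le_one) (Set.right_mem_Icc.2 zero_le_one)
  have hφ1 : φ 1 = f (x + w) - ⟪f' x, w⟫ - (1/2) * ⟪hess x w, w⟫ := by
    simp only [hφ, one_smul, one_pow, one_mul]
  have hφ0 : φ 0 = f x := by
    simp only [hφ, zero_smul, add_zero, zero_mul]; ring
  have hone : ‖(1:ℝ) - 0‖ = 1 := by norm_num
  rw [hφ1, hφ0, hone, mul_one, Real.norm_eq_abs] at key
  have := abs_le.1 key
  linarith [this.2]

lemma descent_lemma {f : E n → ℝ} {f' : E n → E n}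
    (hgrad : ∀ x, HasGradientAt f (f' x) x) {L₁ : ℝ} (hL₁ : 0 ≤ L₁)
    (hlip : ∀ y z, ‖f' y - f' z‖ ≤ L₁ * ‖y - z‖) (x w : E n) :
    f (x + w) ≤ f x + ⟪f' x, w⟫ + L₁ * ‖w‖ ^ 2 := by
  set φ : ℝ → ℝ := fun t => f (x + t • w) - t * ⟪f' x, w⟫ with hφ
  set ψ : ℝ → ℝ := fun t => ⟪f' (x + t • w), w⟫ - ⟪f' x, w⟫ with hψ
  have hder : ∀ t ∈ Set.Icc (0:ℝ) 1, HasDerivWithinAt φ (ψ t) (Set.Icc (0:ℝ) 1) t := by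
    intro t _
    have h1 : HasDerivAt (fun s : ℝ => f (x + s • w)) ⟪f' (x + t • w), w⟫ t := by
      have := (hgrad (x + t • w)).hasFDerivAt.comp_hasDerivAt t (line_hasDerivAt x w t)
      simpa [InnerProductSpace.toDual_apply_apply, Function.comp_def] using this
    have h2 : HasDerivAt (fun s : ℝ => s * ⟪f' x, w⟫) ⟪f' x, w⟫ t := by
      simpa using (hasDerivAt_id t).mul_const ⟪f' x, w⟫
    exact (h1.sub h2).hasDerivWithinAt
  have hbound : ∀ t ∈ Set.Icc (0:ℝ) 1, ‖ψ t‖ ≤ L₁ * ‖w‖ ^ 2 := by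
    intro t ht
    have heq : ψ t = ⟪f' (x + t • w) - f' x, w⟫ := by
      rw [hψ]; simp only [inner_sub_left]
    rw [heq, Real.norm_eq_abs]
    have hCS := abs_real_inner_le_norm (f' (x + t • w) - f' x) w
    have hl := hlip (x + t • w) x
    have hyx : (x + t • w) - x = t • w := by abel
    rw [hyx] at hl
    have hnt : ‖t • w‖ ≤ ‖w‖ := by
      rw [norm_smul, Real.norm_eq_abs, abs_of_nonneg ht.1]
      nlinarith [ht.1, ht.2, norm_nonneg w]
    nlinarith [norm_nonneg w, norm_nonneg (f' (x + t • w) - f' x), hCS, hl, hnt,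
      mul_le_mul_of_nonneg_left hnt hL₁]
  have key := (convex_Icc (0:ℝ) 1).norm_image_sub_le_of_norm_hasDerivWithin_le hder hbound
    (Set.left_mem_Icc.2 zero_le_one) (Set.right_mem_Icc.2 zero_le_one)
  have hφ1 : φ 1 = f (x + w) - ⟪f' x, w⟫ := by
    simp only [hφ, one_smul, one_mul]
  have hφ0 : φ 0 = f x := by
    simp only [hφ, zero_smul, add_zero, zero_mul]; ring
  have hone : ‖(1:ℝ) - 0‖ = 1 := by norm_num
  rw [hφ1, hφ0, hone, mul_one, Real.norm_eq_abs] at key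
  have := abs_le.1 key
  linarith [this.2]
end helpers3

section helpers4
variable {n : ℕ}

lemma prox_subgrad {g : E n → ℝ} (hg : ConvexOn ℝ Set.univ g) {prox : E n → E n}
    (hprox : ∀ v u, (1/2) * ‖prox v - v‖ ^ 2 + g (prox v) ≤ (1/2) * ‖u - v‖ ^ 2 + g u)
    (v u : E n) : ⟪v - prox v, u - prox v⟫ ≤ g u - g (prox v) := by
  set p := prox v with hp
  set w := u - p with hw
  set S := ‖w‖ ^ 2 with hS
  have hSnn : 0 ≤ S := by positivity
  have step : ∀ t : ℝ, 0 < t → t ≤ 1 → ⟪v - p, w⟫ ≤ g u - g p + t * S / 2 := by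
    intro t ht0 ht1
    have hkey := hprox v (p + t • w)
    have he1 : p + t • w - v = (p - v) + t • w := by abel
    have he2 : ‖(p - v) + t • w‖ ^ 2 = ‖p - v‖ ^ 2 + 2 * ⟪p - v, t • w⟫ + ‖t • w‖ ^ 2 :=
      norm_add_sq_real _ _
    have he3 : ⟪p - v, t • w⟫ = t * ⟪p - v, w⟫ := real_inner_smul_right _ _ _
    have he4 : ‖t • w‖ ^ 2 = t ^ 2 * S := by
      rw [hS, norm_smul, Real.norm_eq_abs, mul_pow, sq_abs]
    have he5 : p + t • w = (1 - t) • p + t • u := by rw [hw]; module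
    have hgc : g (p + t • w) ≤ (1 - t) * g p + t * g u := by
      rw [he5]
      have := hg.2 (Set.mem_univ p) (Set.mem_univ u)
        (show (0:ℝ) ≤ 1 - t by linarith) (le_of_lt ht0) (by ring)
      simpa [smul_eq_mul] using this
    rw [he1] at hkey
    rw [he2, he3, he4] at hkey
    have hvp : ⟪v - p, w⟫ = -⟪p - v, w⟫ := by
      rw [← inner_neg_left]; congr 1; abel
    rw [hvp]
    have hmain : t * (g p - g u) ≤ t * (⟪p - v, w⟫ + t * S / 2) := by nlinarith [hkey, hgc]
    have h7 := le_of_mul_le_mul_left hmain ht0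
    linarith
  refine le_of_forall_pos_le_add ?_
  intro ε hε
  set t := min 1 (2 * ε / (S + 1)) with hts
  have ht0 : 0 < t := lt_min one_pos (by positivity)
  have ht1 : t ≤ 1 := min_le_left _ _
  have ht2 : t ≤ 2 * ε / (S + 1) := min_le_right _ _
  have hstep := step t ht0 ht1
  have : t * S / 2 ≤ ε := by
    rw [le_div_iff₀ (by positivity : (0:ℝ) < S + 1)] at ht2
    nlinarith [ht2, hSnn, hε]
  linarith

lemma prox_lipschitz {g : E n → ℝ} (hg : ConvexOn ℝ Set.univ g) {prox : E n → E n}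
    (hprox : ∀ v u, (1/2) * ‖prox v - v‖ ^ 2 + g (prox v) ≤ (1/2) * ‖u - v‖ ^ 2 + g u)
    (v₁ v₂ : E n) : ‖prox v₁ - prox v₂‖ ≤ ‖v₁ - v₂‖ := by
  set p₁ := prox v₁
  set p₂ := prox v₂
  have h1 := prox_subgrad hg hprox v₁ p₂
  have h2 := prox_subgrad hg hprox v₂ p₁
  have e1 : ⟪v₁ - p₁, p₂ - p₁⟫ = -⟪v₁ - p₁, p₁ - p₂⟫ := by
    rw [← inner_neg_right]; congr 1; abel
  have e3 : ⟪(v₂ - p₂) - (v₁ - p₁), p₁ - p₂⟫ ≤ 0 := by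
    rw [inner_sub_left]; linarith [h1, h2, e1 ▸ h1]
  have e4 : (v₂ - p₂) - (v₁ - p₁) = (p₁ - p₂) - (v₁ - v₂) := by abel
  rw [e4, inner_sub_left, real_inner_self_eq_norm_sq] at e3
  have hCS := real_inner_le_norm (v₁ - v₂) (p₁ - p₂)
  rcases eq_or_lt_of_le (norm_nonneg (p₁ - p₂)) with h | h
  · rw [← h]; exact norm_nonneg _
  · nlinarith [e3, hCS, h]

lemma min_subgrad {f g : E n → ℝ} {f' : E n → E n}
    (hgrad : ∀ x, HasGradientAt f (f' x) x) (hg : ConvexOn ℝ Set.univ g)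
    {xb : E n} (hmin : ∀ z, f xb + g xb ≤ f z + g z) (u : E n) :
    ⟪-f' xb, u - xb⟫ ≤ g u - g xb := by
  set w := u - xb with hw
  have key : g xb - g u ≤ ⟪f' xb, w⟫ := by
    refine ge_of_tendsto (dir_slope_tendsto (hgrad xb) w) ?_
    filter_upwards [Ioc_mem_nhdsGT_of_mem (⟨le_refl (0:ℝ), zero_lt_one⟩ : (0:ℝ) ∈ Set.Ico 0 1)]
      with t ht
    have hgc : g (xb + t • w) ≤ (1 - t) * g xb + t * g u := by
      have he5 : xb + t • w = (1 - t) • xb + t • u := by rw [hw]; module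
      rw [he5]
      have := hg.2 (Set.mem_univ xb) (Set.mem_univ u)
        (show (0:ℝ) ≤ 1 - t by linarith [ht.2]) (le_of_lt ht.1) (by ring)
      simpa [smul_eq_mul] using this
    have hm := hmin (xb + t • w)
    rw [le_div_iff₀ ht.1]
    nlinarith [hm, hgc]
  rw [inner_neg_left]
  linarith [key]
end helpers4

set_option maxHeartbeats 1000000 in
/-- Under the L₁-Lipschitz gradient, L₂-Lipschitz Hessian, Luo–Tseng
error bound, and IRPN iteration hypotheses, if `ρ ∈ [0,1)` then the step size
eventually equals 1: there is `k₀ ≥ 0` with `α_k = 1` for all `k ≥ k₀`. -/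
theorem stmt12 {n : ℕ} (f g : E n → ℝ) (f' : E n → E n)
    (hess : E n → E n →L[ℝ] E n) (prox : E n → E n)
    (hfconv : ConvexOn ℝ Set.univ f) (hfC2 : ContDiff ℝ 2 f)
    (hgrad : ∀ x, HasGradientAt f (f' x) x)
    (hhess : ∀ x, HasFDerivAt f' (hess x) x)
    (hsa : ∀ x u w, ⟪hess x u, w⟫ = ⟪u, hess x w⟫)
    (hgconv : ConvexOn ℝ Set.univ g) (hgcont : Continuous g)
    (hprox : ∀ v u, (1/2) * ‖prox v - v‖ ^ 2 + g (prox v) ≤ (1/2) * ‖u - v‖ ^ 2 + g u)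
    (F : E n → ℝ) (hF : ∀ y, F y = f y + g y)
    (X : Set (E n)) (hX : X = {y | ∀ z, F y ≤ F z}) (hXne : X.Nonempty)
    (r : E n → ℝ) (hr : ∀ y, r y = ‖y - prox (y - f' y)‖)
    (L₁ : ℝ) (hL₁ : 0 < L₁) (hlip : ∀ y z, ‖f' y - f' z‖ ≤ L₁ * ‖y - z‖)
    -- IRPN parameters
    (θ ζ η c ρ β : ℝ)
    (hθ : θ ∈ Set.Ioo (0:ℝ) (1/2)) (hζ : ζ ∈ Set.Ioo θ (1/2))
    (hη : η ∈ Set.Ioo (0:ℝ) 1) (hc : 0 < c) (hρ : ρ ∈ Set.Icc (0:ℝ) 1)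
    (hβ : β ∈ Set.Ioo (0:ℝ) 1)
    -- IRPN iterates and auxiliary data
    (x xh : ℕ → E n) (μ : ℕ → ℝ) (H : ℕ → E n →L[ℝ] E n)
    (ℓ q : ℕ → E n → ℝ) (rk : ℕ → E n → ℝ)
    (d : ℕ → E n) (i : ℕ → ℕ) (α : ℕ → ℝ)
    (hrpos : ∀ k, 0 < r (x k))
    (hμ : ∀ k, μ k = c * r (x k) ^ ρ)
    (hH : ∀ k, H k = hess (x k) + μ k • ContinuousLinearMap.id ℝ (E n))
    (hℓ : ∀ k y, ℓ k y = f (x k) + ⟪f' (x k), y - x k⟫ + g y)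
    (hq : ∀ k y, q k y = ℓ k y + (1/2) * ⟪H k (y - x k), y - x k⟫)
    (hrk : ∀ k y, rk k y = ‖y - prox (y - f' (x k) - H k (y - x k))‖)
    (hinex1 : ∀ k, rk k (xh k) ≤ η * min (r (x k)) (r (x k) ^ (1 + ρ)))
    (hinex2 : ∀ k, q k (xh k) - q k (x k) ≤ ζ * (ℓ k (xh k) - ℓ k (x k)))
    (hd : ∀ k, d k = xh k - x k)
    (hdesc : ∀ k, F (x k) - F (x k + β ^ i k • d k) ≥
      θ * (ℓ k (x k) - ℓ k (x k + β ^ i k • d k)))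
    (hmin : ∀ k j, j < i k → ¬ (F (x k) - F (x k + β ^ j • d k) ≥
      θ * (ℓ k (x k) - ℓ k (x k + β ^ j • d k))))
    (hα : ∀ k, α k = β ^ i k)
    (hstep : ∀ k, x (k + 1) = x k + α k • d k)
    -- Lipschitz Hessian
    (L₂ : ℝ) (hL₂ : 0 < L₂) (hlip2 : ∀ y z, ‖hess y - hess z‖ ≤ L₂ * ‖y - z‖)
    -- Luo-Tseng error bound
    (κ ε : ℝ) (hκ : 0 < κ) (hε : 0 < ε)
    (hEB : ∀ y : E n, F y ≤ F (x 0) → r y ≤ ε → Metric.infDist y X ≤ κ * r y)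
    (hρlt : ρ < 1) :
    ∃ k₀ : ℕ, ∀ k, k₀ ≤ k → α k = 1 := by
  obtain ⟨hθ0, hθh⟩ := hθ
  obtain ⟨hζθ, hζh⟩ := hζ
  have hζ0 : 0 < ζ := lt_trans hθ0 hζθ
  obtain ⟨hη0, hη1⟩ := hη
  obtain ⟨hρ0, hρ1⟩ := hρ
  obtain ⟨hβ0, hβ1⟩ := hβ
  obtain ⟨xs, hxsX⟩ := hXne
  have hxs : ∀ z, F xs ≤ F z := by rw [hX] at hxsX; exact hxsX
  have hμpos : ∀ k, 0 < μ k := fun k => by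
    rw [hμ k]; exact mul_pos hc (Real.rpow_pos_of_pos (hrpos k) ρ)
  have hPSD : ∀ z u, 0 ≤ ⟪hess z u, u⟫ := hess_psd hfconv hgrad hhess
  have hHquad : ∀ k (u : E n), μ k * ‖u‖^2 ≤ ⟪H k u, u⟫ := by
    intro k u
    rw [hH k]
    have : ⟪(hess (x k) + μ k • ContinuousLinearMap.id ℝ (E n)) u, u⟫
        = ⟪hess (x k) u, u⟫ + μ k * ‖u‖^2 := by
      simp only [ContinuousLinearMap.add_apply, ContinuousLinearMap.smul_apply,
        ContinuousLinearMap.id_apply, inner_add_left, real_inner_smul_left,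
        real_inner_self_eq_norm_sq]
    rw [this]
    linarith [hPSD (x k) u]
  have hhessnorm : ∀ z, ‖hess z‖ ≤ L₁ := by
    intro z
    exact (hhess z).le_of_lip' hL₁.le (Filter.Eventually.of_forall (fun a => hlip a z))
  have hHnorm : ∀ k, ‖H k‖ ≤ L₁ + μ k := by
    intro k
    rw [hH k]
    calc ‖hess (x k) + μ k • ContinuousLinearMap.id ℝ (E n)‖
        ≤ ‖hess (x k)‖ + ‖μ k • ContinuousLinearMap.id ℝ (E n)‖ := norm_add_le _ _
      _ ≤ L₁ + μ k := by
          have h1 : ‖μ k • ContinuousLinearMap.id ℝ (E n)‖ ≤ μ k := by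
            refine le_trans (ContinuousLinearMap.opNorm_smul_le _ _) ?_
            rw [Real.norm_eq_abs, abs_of_pos (hμpos k)]
            nlinarith [ContinuousLinearMap.norm_id_le (𝕜 := ℝ) (E := E n), hμpos k]
          linarith [hhessnorm (x k)]
  have hH_op : ∀ k (u : E n), ‖H k u‖ ≤ (L₁ + μ k) * ‖u‖ := by
    intro k u
    calc ‖H k u‖ ≤ ‖H k‖ * ‖u‖ := (H k).le_opNorm u
      _ ≤ (L₁ + μ k) * ‖u‖ := mul_le_mul_of_nonneg_right (hHnorm k) (norm_nonneg u)
  -- the model decrease D k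
  obtain ⟨D, hDdef⟩ : ∃ D : ℕ → ℝ, ∀ k, D k = ℓ k (x k) - ℓ k (xh k) :=
    ⟨fun k => ℓ k (x k) - ℓ k (xh k), fun _ => rfl⟩
  have hqx : ∀ k, q k (x k) = ℓ k (x k) := by
    intro k
    rw [hq k (x k)]
    simp
  have hqxh : ∀ k, q k (xh k) = ℓ k (xh k) + (1/2) * ⟪H k (d k), d k⟫ := by
    intro k
    rw [hq k (xh k), ← hd k]
  have hkey1 : ∀ k, μ k * ‖d k‖^2 ≤ 2 * (1 - ζ) * D k := by
    intro k
    have h2 := hinex2 k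
    rw [hqx, hqxh] at h2
    have := hHquad k (d k)
    rw [hDdef k]
    linarith
  have hD0 : ∀ k, 0 ≤ D k := by
    intro k
    have h1 := hkey1 k
    have h2 : (0:ℝ) ≤ μ k * ‖d k‖^2 := mul_nonneg (hμpos k).le (sq_nonneg _)
    by_contra hneg
    push_neg at hneg
    nlinarith [hneg, hζh]
  have hℓx : ∀ k, ℓ k (x k) = f (x k) + g (x k) := by
    intro k; rw [hℓ]; simp
  have hℓconv : ∀ k (a : ℝ), 0 ≤ a → a ≤ 1 →
      ℓ k (x k + a • d k) ≤ ℓ k (x k) + a * (ℓ k (xh k) - ℓ k (x k)) := by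
    intro k a ha0 ha1
    have hgc : g (x k + a • d k) ≤ (1 - a) * g (x k) + a * g (xh k) := by
      have he5 : x k + a • d k = (1 - a) • x k + a • xh k := by rw [hd k]; module
      rw [he5]
      have := hgconv.2 (Set.mem_univ (x k)) (Set.mem_univ (xh k))
        (show (0:ℝ) ≤ 1 - a by linarith) ha0 (by ring)
      simpa [smul_eq_mul] using this
    rw [hℓ k (x k + a • d k), hℓ k (xh k), hℓx k]
    have he1 : (x k + a • d k) - x k = a • d k := by abel
    rw [he1, real_inner_smul_right]
    have he2 : ⟪f' (x k), xh k - x k⟫ = ⟪f' (x k), d k⟫ := by rw [← hd k]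
    rw [he2]
    nlinarith [hgc]
  have hacc : ∀ k (a : ℝ), 0 < a → a ≤ 1 → a * (2 * (1 - ζ) * L₁) ≤ (1 - θ) * μ k →
      F (x k) - F (x k + a • d k) ≥ θ * (ℓ k (x k) - ℓ k (x k + a • d k)) := by
    intro k a ha0 ha1 hcond
    have hdl := descent_lemma hgrad hL₁.le hlip (x k) (a • d k)
    have hna : ‖a • d k‖^2 = a^2 * ‖d k‖^2 := by
      rw [norm_smul, Real.norm_eq_abs, mul_pow, sq_abs]
    have hFd : F (x k + a • d k) - F (x k) ≤
        (ℓ k (x k + a • d k) - ℓ k (x k)) + L₁ * (a^2 * ‖d k‖^2) := by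
      rw [hF, hF, hℓ k (x k + a • d k), hℓx k]
      have he1 : (x k + a • d k) - x k = a • d k := by abel
      rw [he1]
      rw [hna] at hdl
      linarith [hdl]
    have hlc := hℓconv k a ha0.le ha1
    have hld : a * D k ≤ ℓ k (x k) - ℓ k (x k + a • d k) := by
      rw [hDdef k]
      nlinarith [hlc]
    have hkd := hkey1 k
    have hmain : L₁ * (a^2 * ‖d k‖^2) ≤ (1 - θ) * (a * D k) := by
      have h1 : (a * ‖d k‖^2) * (a * (2*(1-ζ)*L₁)) ≤ (a * ‖d k‖^2) * ((1-θ) * μ k) :=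
        mul_le_mul_of_nonneg_left hcond (by positivity)
      have h2 : ((1-θ)*a) * (μ k * ‖d k‖^2) ≤ ((1-θ)*a) * (2*(1-ζ) * D k) :=
        mul_le_mul_of_nonneg_left hkd (by nlinarith [hθh, ha0])
      have h3 : (0:ℝ) < 2*(1-ζ) := by linarith
      nlinarith [h1, h2, h3]
    have h4 : (1-θ) * (a * D k) ≤ (1-θ) * (ℓ k (x k) - ℓ k (x k + a • d k)) :=
      mul_le_mul_of_nonneg_left hld (by linarith)
    nlinarith [hFd, hmain, h4]
  have hα1 : ∀ k, α k ≤ 1 := fun k => by rw [hα k]; exact pow_le_one₀ hβ0.le hβ1.le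
  have hαpos : ∀ k, 0 < α k := fun k => by rw [hα k]; exact pow_pos hβ0 _
  have hαlow : ∀ k, α k = 1 ∨ β * ((1 - θ) * μ k) ≤ α k * (2 * (1 - ζ) * L₁) := by
    intro k
    rcases Nat.eq_zero_or_pos (i k) with h0 | hpos
    · left; rw [hα k, h0, pow_zero]
    · right
      obtain ⟨j, hj⟩ : ∃ j, i k = j + 1 := ⟨i k - 1, (Nat.succ_pred_eq_of_pos hpos).symm⟩
      have hfail := hmin k j (by omega)
      have hbj0 : 0 < β ^ j := pow_pos hβ0 _
      have hbj1 : β ^ j ≤ 1 := pow_le_one₀ hβ0.le hβ1.le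
      by_contra hcon
      push_neg at hcon
      have h5 : β * (β ^ j * (2 * (1 - ζ) * L₁)) < β * ((1 - θ) * μ k) := by
        rw [hα k, hj, pow_succ] at hcon
        linear_combination hcon
      have h6 : β ^ j * (2 * (1 - ζ) * L₁) ≤ (1 - θ) * μ k :=
        le_of_lt (lt_of_mul_lt_mul_left h5 hβ0.le)
      exact hfail (hacc k (β ^ j) hbj0 hbj1 h6)
  have hdesc' : ∀ k, θ * (α k * D k) ≤ F (x k) - F (x (k+1)) := by
    intro k
    have h1 := hdesc k
    rw [← hα k] at h1
    have h2 := hℓconv k (α k) (hαpos k).le (hα1 k)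
    have h3 : α k * D k ≤ ℓ k (x k) - ℓ k (x k + α k • d k) := by
      rw [hDdef k]
      nlinarith [h2]
    have h4 : θ * (α k * D k) ≤ θ * (ℓ k (x k) - ℓ k (x k + α k • d k)) :=
      mul_le_mul_of_nonneg_left h3 hθ0.le
    rw [hstep k]
    linarith [h1, h4]
  have hFdec : ∀ k, F (x (k+1)) ≤ F (x k) := by
    intro k
    have h1 := hdesc' k
    nlinarith [mul_nonneg (hαpos k).le (hD0 k), hθ0]
  have hFanti : Antitone (fun k => F (x k)) := antitone_nat_of_succ_le hFdec
  have hFlb : ∀ k, F xs ≤ F (x k) := fun k => hxs (x k)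
  have htend : Tendsto (fun k => F (x k)) atTop (nhds (⨅ k, F (x k))) :=
    tendsto_atTop_ciInf hFanti ⟨F xs, by rintro y ⟨k, rfl⟩; exact hFlb k⟩
  have htend1 : Tendsto (fun k => F (x (k+1))) atTop (nhds (⨅ k, F (x k))) := by
    have := htend.comp (tendsto_add_atTop_nat 1)
    simpa [Function.comp_def] using this
  have hdiff0 : Tendsto (fun k => F (x k) - F (x (k+1))) atTop (nhds 0) := by
    have := htend.sub htend1
    simpa using this
  have hco : (0:ℝ) ≤ 2*(1-ζ)/θ := by
    apply div_nonneg <;> linarith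
  have hm0 : Tendsto (fun k => α k * (μ k * ‖d k‖^2)) atTop (nhds 0) := by
    have hub : ∀ k, α k * (μ k * ‖d k‖^2) ≤ (2*(1-ζ)/θ) * (F (x k) - F (x (k+1))) := by
      intro k
      have h1 := hdesc' k
      have h3 : α k * (μ k * ‖d k‖^2) ≤ α k * (2*(1-ζ) * D k) :=
        mul_le_mul_of_nonneg_left (hkey1 k) (hαpos k).le
      have h4 : (2*(1-ζ)/θ) * (θ * (α k * D k)) ≤ (2*(1-ζ)/θ) * (F (x k) - F (x (k+1))) :=
        mul_le_mul_of_nonneg_left h1 hco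
      have h5 : (2*(1-ζ)/θ) * (θ * (α k * D k)) = 2*(1-ζ) * (α k * D k) := by
        field_simp
      nlinarith [h3, h4, h5]
    refine squeeze_zero (fun k => mul_nonneg (hαpos k).le
      (mul_nonneg (hμpos k).le (sq_nonneg _))) hub ?_
    have := hdiff0.const_mul (2*(1-ζ)/θ)
    simpa using this
  have hrd : ∀ k, (1 - η) * r (x k) ≤ (2 + L₁ + μ k) * ‖d k‖ := by
    intro k
    have hrx : r (x k) = ‖x k - prox (x k - f' (x k))‖ := hr (x k)
    set p := prox (xh k - f' (x k) - H k (d k)) with hp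
    have hrkk : rk k (xh k) = ‖xh k - p‖ := by
      rw [hrk k (xh k), ← hd k]
    have htri : ‖x k - prox (x k - f' (x k))‖ ≤
        ‖x k - xh k‖ + ‖xh k - p‖ + ‖p - prox (x k - f' (x k))‖ := by
      calc ‖x k - prox (x k - f' (x k))‖
          = ‖(x k - xh k) + ((xh k - p) + (p - prox (x k - f' (x k))))‖ := by congr 1; abel
        _ ≤ _ := by
            refine le_trans (norm_add_le _ _) ?_
            linarith [norm_add_le (xh k - p) (p - prox (x k - f' (x k)))]
    have hplip : ‖p - prox (x k - f' (x k))‖ ≤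
        ‖(xh k - f' (x k) - H k (d k)) - (x k - f' (x k))‖ :=
      prox_lipschitz hgconv hprox _ _
    have hveq : (xh k - f' (x k) - H k (d k)) - (x k - f' (x k)) = d k - H k (d k) := by
      rw [hd k]; abel
    have hvb : ‖d k - H k (d k)‖ ≤ (1 + L₁ + μ k) * ‖d k‖ := by
      calc ‖d k - H k (d k)‖ ≤ ‖d k‖ + ‖H k (d k)‖ := norm_sub_le _ _
        _ ≤ ‖d k‖ + (L₁ + μ k) * ‖d k‖ := by linarith [hH_op k (d k)]
        _ = (1 + L₁ + μ k) * ‖d k‖ := by ring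
    have hxd : ‖x k - xh k‖ = ‖d k‖ := by rw [norm_sub_rev, ← hd k]
    have hrkb : ‖xh k - p‖ ≤ η * r (x k) := by
      rw [← hrkk]
      exact le_trans (hinex1 k) (mul_le_mul_of_nonneg_left (min_le_left _ _) hη0.le)
    rw [hveq] at hplip
    rw [hrx]
    nlinarith [htri, hplip, hvb, hxd, hrkb]
  have hden : (0:ℝ) < 2*(1-ζ)*L₁ := by nlinarith [hζh, hL₁]
  have hrlim : Tendsto (fun k => r (x k)) atTop (nhds 0) := by
    rw [tendsto_order]
    constructor
    · intro a ha
      exact Filter.Eventually.of_forall (fun k => lt_trans ha (hrpos k))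
    · intro a ha
      obtain ⟨A, hA⟩ : ∃ v : ℝ, v = 2 + L₁ := ⟨_, rfl⟩
      have hApos : (0:ℝ) < A := by rw [hA]; linarith
      obtain ⟨μb, hμb⟩ : ∃ v : ℝ, v = c * a ^ ρ := ⟨_, rfl⟩
      have hμbpos : 0 < μb := by rw [hμb]; exact mul_pos hc (Real.rpow_pos_of_pos ha ρ)
      obtain ⟨B₁, hB₁⟩ : ∃ v : ℝ, v = μb * ((1-η)*a)^2 / (2*A)^2 := ⟨_, rfl⟩
      obtain ⟨B₂, hB₂⟩ : ∃ v : ℝ, v = (1-η)^2 * a^((2:ℝ)-ρ) / (4*c) := ⟨_, rfl⟩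
      have hB₁pos : 0 < B₁ := by
        rw [hB₁]
        apply div_pos
        · exact mul_pos hμbpos (pow_pos (mul_pos (by linarith) ha) 2)
        · positivity
      have hB₂pos : 0 < B₂ := by
        rw [hB₂]
        apply div_pos
        · exact mul_pos (pow_pos (by linarith) 2) (Real.rpow_pos_of_pos ha _)
        · positivity
      obtain ⟨B, hBdef⟩ : ∃ v : ℝ, v = min B₁ B₂ := ⟨_, rfl⟩
      have hBpos : 0 < B := by rw [hBdef]; exact lt_min hB₁pos hB₂pos
      obtain ⟨ab, hab⟩ : ∃ v : ℝ, v = min 1 (β*((1-θ)*μb)/(2*(1-ζ)*L₁)) := ⟨_, rfl⟩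
      have habpos : 0 < ab := by
        rw [hab]
        apply lt_min one_pos
        apply div_pos _ hden
        exact mul_pos hβ0 (mul_pos (by linarith) hμbpos)
      have hclaim : ∀ k, a ≤ r (x k) → ab * B ≤ α k * (μ k * ‖d k‖^2) := by
        intro k har
        have ht : 0 < r (x k) := hrpos k
        have hμlb : μb ≤ μ k := by
          rw [hμ k, hμb]
          exact mul_le_mul_of_nonneg_left (Real.rpow_le_rpow ha.le har hρ0) hc.le
        have hdlb := hrd k
        have hdn : (0:ℝ) ≤ ‖d k‖ := norm_nonneg _
        have hBle : B ≤ μ k * ‖d k‖^2 := by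
          rcases le_or_gt (μ k) A with hcase | hcase
          · -- small μ
            have h1 : (1-η)*a ≤ (1-η)*r (x k) :=
              mul_le_mul_of_nonneg_left har (by linarith)
            have h2 : (1-η)*r (x k) ≤ 2*A*‖d k‖ := by
              have h2a : (2 + L₁ + μ k) * ‖d k‖ ≤ 2*A*‖d k‖ := by
                apply mul_le_mul_of_nonneg_right _ hdn
                rw [hA]; linarith
              linarith
            have h3 : (0:ℝ) ≤ (1-η)*a := le_of_lt (mul_pos (by linarith) ha)
            have h4 := mul_self_le_mul_self h3 (le_trans h1 h2)
            have hs : ((1-η)*a)^2 ≤ (2*A)^2 * ‖d k‖^2 := by nlinarith [h4]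
            rw [hBdef]
            refine le_trans (min_le_left _ _) ?_
            rw [hB₁, div_le_iff₀ (by positivity)]
            calc μb * ((1-η)*a)^2 ≤ μb * ((2*A)^2 * ‖d k‖^2) :=
                  mul_le_mul_of_nonneg_left hs hμbpos.le
              _ = μb * (‖d k‖^2 * (2*A)^2) := by ring
              _ ≤ μ k * (‖d k‖^2 * (2*A)^2) :=
                  mul_le_mul_of_nonneg_right hμlb (by positivity)
              _ = μ k * ‖d k‖^2 * (2*A)^2 := by ring
          · -- large μ
            have hs : (1-η)*r (x k) ≤ 2*(μ k)*‖d k‖ := by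
              have h2a : (2 + L₁ + μ k) * ‖d k‖ ≤ 2*(μ k)*‖d k‖ := by
                apply mul_le_mul_of_nonneg_right _ hdn
                rw [hA] at hcase; linarith
              linarith
            have h7 : (0:ℝ) ≤ (1-η)*r (x k) := le_of_lt (mul_pos (by linarith) ht)
            have h5 := mul_self_le_mul_self h7 hs
            have h6 : (1-η)^2 * (r (x k))^2 ≤ 4*(μ k)^2*‖d k‖^2 := by nlinarith [h5]
            have ht2 : (r (x k))^2 = (r (x k))^ρ * (r (x k))^((2:ℝ)-ρ) := by
              rw [← Real.rpow_add ht]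
              rw [show ρ + ((2:ℝ)-ρ) = ((2:ℕ):ℝ) by push_cast; ring, Real.rpow_natCast]
            have hsq : (μ k)^2 = (c * (r (x k))^ρ) * μ k := by rw [← hμ k]; ring
            have hrp : 0 < (r (x k))^ρ := Real.rpow_pos_of_pos ht ρ
            have h8 : (1-η)^2 * (r (x k))^((2:ℝ)-ρ) * (r (x k))^ρ ≤
                4*c*(μ k * ‖d k‖^2) * (r (x k))^ρ := by
              calc (1-η)^2 * (r (x k))^((2:ℝ)-ρ) * (r (x k))^ρ
                  = (1-η)^2 * (r (x k))^2 := by rw [ht2]; ring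
                _ ≤ 4*(μ k)^2*‖d k‖^2 := h6
                _ = 4*c*(μ k * ‖d k‖^2) * (r (x k))^ρ := by rw [hsq]; ring
            have h9 : (1-η)^2 * (r (x k))^((2:ℝ)-ρ) ≤ 4*c*(μ k * ‖d k‖^2) :=
              le_of_mul_le_mul_right h8 hrp
            have h10 : a^((2:ℝ)-ρ) ≤ (r (x k))^((2:ℝ)-ρ) :=
              Real.rpow_le_rpow ha.le har (by linarith)
            have h11 : (1-η)^2 * a^((2:ℝ)-ρ) ≤ (1-η)^2 * (r (x k))^((2:ℝ)-ρ) :=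
              mul_le_mul_of_nonneg_left h10 (by positivity)
            rw [hBdef]
            refine le_trans (min_le_right _ _) ?_
            rw [hB₂, div_le_iff₀ (by positivity)]
            linarith only [h9, h11]
        have hαlb : ab ≤ α k := by
          rcases hαlow k with hcase | hcase
          · rw [hcase, hab]; exact min_le_left _ _
          · rw [hab]
            refine le_trans (min_le_right _ _) ?_
            rw [div_le_iff₀ hden]
            refine le_trans ?_ hcase
            have h12 : (1-θ)*μb ≤ (1-θ)*μ k := mul_le_mul_of_nonneg_left hμlb (by linarith)
            exact mul_le_mul_of_nonneg_left h12 hβ0.le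
        exact mul_le_mul hαlb hBle hBpos.le (hαpos k).le
      have hev := hm0.eventually_lt_const (mul_pos habpos hBpos)
      filter_upwards [hev] with k hk
      by_contra hcon
      push_neg at hcon
      exact absurd (hclaim k hcon) (not_le.mpr hk)
  -- closedness of X, continuity of F
  have hFcont : Continuous F := by
    have hFe : F = fun y => f y + g y := funext hF
    rw [hFe]
    exact (hfC2.continuous).add hgcont
  have hXcl : IsClosed X := by
    rw [hX]
    have hXe : {y : E n | ∀ z, F y ≤ F z} = ⋂ z, {y | F y ≤ F z} := by ext y; simp
    rw [hXe]
    exact isClosed_iInter (fun z => isClosed_le hFcont continuous_const)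
  have hXne' : X.Nonempty := ⟨xs, hxsX⟩
  -- constants for the final phase
  obtain ⟨C₅, hC₅⟩ : ∃ v : ℝ, v = (L₁ + 2*c + 1)*η + 2*c*κ := ⟨_, rfl⟩
  have hC₅pos : 0 < C₅ := by
    rw [hC₅]
    have h1 : 0 < (L₁ + 2*c + 1)*η := mul_pos (by linarith) hη0
    have h2 : 0 < 2*c*κ := mul_pos (by linarith) hκ
    linarith
  obtain ⟨C₆, hC₆⟩ : ∃ v : ℝ, v = 2*L₂*C₅ + 2*L₂^2*κ^2 := ⟨_, rfl⟩
  have hC₆pos : 0 < C₆ := by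
    rw [hC₆]
    have h1 : 0 < 2*L₂*C₅ := mul_pos (by linarith) hC₅pos
    have h2 : 0 < 2*L₂^2*κ^2 := by positivity
    linarith
  obtain ⟨T, hT⟩ : ∃ v : ℝ, v = (c^2/C₆)^(((1:ℝ)-ρ)⁻¹) := ⟨_, rfl⟩
  have hTpos : 0 < T := by
    rw [hT]
    exact Real.rpow_pos_of_pos (div_pos (by positivity) hC₆pos) _
  have hRb : 0 < min ε (min 1 T) := lt_min hε (lt_min one_pos hTpos)
  obtain ⟨K, hK⟩ := eventually_atTop.mp (hrlim.eventually_lt_const hRb)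
  refine ⟨K, fun k hk => ?_⟩
  have hrK := hK k hk
  have ht : 0 < r (x k) := hrpos k
  have ht1 : r (x k) ≤ 1 :=
    le_of_lt (lt_of_lt_of_le hrK (le_trans (min_le_right _ _) (min_le_left _ _)))
  have htε : r (x k) ≤ ε := le_of_lt (lt_of_lt_of_le hrK (min_le_left _ _))
  have htT : r (x k) ≤ T :=
    le_of_lt (lt_of_lt_of_le hrK (le_trans (min_le_right _ _) (min_le_right _ _)))
  -- projection onto X and error bound
  obtain ⟨xb, hxbX, hxbd⟩ := hXcl.exists_infDist_eq_dist hXne' (x k)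
  have hδ : dist (x k) xb ≤ κ * r (x k) := by
    rw [← hxbd]
    exact hEB (x k) (hFanti (Nat.zero_le k)) htε
  have hδn : ‖x k - xb‖ ≤ κ * r (x k) := by rwa [← dist_eq_norm]
  have hδnn : (0:ℝ) ≤ ‖x k - xb‖ := norm_nonneg _
  have hxbmin : ∀ z, F xb ≤ F z := by rw [hX] at hxbX; exact hxbX
  have hfgmin : ∀ z, f xb + g xb ≤ f z + g z := fun z => by rw [← hF, ← hF]; exact hxbmin z
  -- monotonicity inequality for the subproblem solution
  set p := prox (xh k - f' (x k) - H k (d k)) with hp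
  have hs1 : ⟪(xh k - f' (x k) - H k (d k)) - p, xb - p⟫ ≤ g xb - g p :=
    prox_subgrad hgconv hprox _ xb
  have hs2 : ⟪-f' xb, p - xb⟫ ≤ g p - g xb := min_subgrad hgrad hgconv hfgmin p
  have hmono : 0 ≤ ⟪((xh k - f' (x k) - H k (d k)) - p) + f' xb, p - xb⟫ := by
    have e1 : ⟪(xh k - f' (x k) - H k (d k)) - p, xb - p⟫
        = -⟪(xh k - f' (x k) - H k (d k)) - p, p - xb⟫ := by
      rw [← inner_neg_right]; congr 1; abel
    have e2 : ⟪-f' xb, p - xb⟫ = -⟪f' xb, p - xb⟫ := by rw [inner_neg_left]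
    rw [inner_add_left]
    rw [e1] at hs1; rw [e2] at hs2
    linarith only [hs1, hs2]
  -- Taylor expansion error
  obtain ⟨evec, hevdef⟩ : ∃ v : E n, v = f' (x k) - f' xb - hess (x k) (x k - xb) := ⟨_, rfl⟩
  have hevb : ‖evec‖ ≤ L₂ * ‖x k - xb‖^2 := by
    have hTay := grad_taylor hhess hlip2 hL₂.le (x k) xb
    have hneg : evec = -(f' xb - f' (x k) - hess (x k) (xb - x k)) := by
      rw [hevdef, show x k - xb = -(xb - x k) by abel, map_neg]
      abel
    rw [hneg, norm_neg]
    calc ‖f' xb - f' (x k) - hess (x k) (xb - x k)‖ ≤ L₂ * ‖xb - x k‖^2 := hTay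
      _ = L₂ * ‖x k - xb‖^2 := by rw [norm_sub_rev]
  -- decomposition identity
  have hHapp : H k (x k - xb) = hess (x k) (x k - xb) + μ k • (x k - xb) := by
    rw [hH k]
    simp [ContinuousLinearMap.add_apply, ContinuousLinearMap.smul_apply]
  have hdsum : d k + (x k - xb) = (p - xb) + (xh k - p) := by rw [hd k]; abel
  have hlin : H k (d k) + H k (x k - xb) = H k ((p - xb) + (xh k - p)) := by
    rw [← map_add, hdsum]
  have hdecomp : ((xh k - f' (x k) - H k (d k)) - p) + f' xb
      = (xh k - p) - H k ((p - xb) + (xh k - p)) + μ k • (x k - xb) - evec := by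
    rw [← hlin, hHapp, hevdef]
    abel
  -- inner-product estimate
  have hIB : μ k * ‖p - xb‖^2 ≤ ((L₁ + μ k + 1) * ‖xh k - p‖ + μ k * ‖x k - xb‖
      + L₂ * ‖x k - xb‖^2) * ‖p - xb‖ := by
    have h0 := hmono
    rw [hdecomp] at h0
    have hexp : ⟪(xh k - p) - H k ((p - xb) + (xh k - p)) + μ k • (x k - xb) - evec, p - xb⟫
        = ⟪xh k - p, p - xb⟫ - ⟪H k (p - xb), p - xb⟫ - ⟪H k (xh k - p), p - xb⟫
          + μ k * ⟪x k - xb, p - xb⟫ - ⟪evec, p - xb⟫ := by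
      rw [inner_sub_left, inner_add_left, inner_sub_left, map_add, inner_add_left,
        real_inner_smul_left]
      ring
    rw [hexp] at h0
    have hq1 : μ k * ‖p - xb‖^2 ≤ ⟪H k (p - xb), p - xb⟫ := hHquad k _
    have c1 : ⟪xh k - p, p - xb⟫ ≤ ‖xh k - p‖ * ‖p - xb‖ := real_inner_le_norm _ _
    have c2 : -⟪H k (xh k - p), p - xb⟫ ≤ ((L₁ + μ k) * ‖xh k - p‖) * ‖p - xb‖ := by
      have habs := abs_real_inner_le_norm (H k (xh k - p)) (p - xb)
      have h2 := mul_le_mul_of_nonneg_right (hH_op k (xh k - p)) (norm_nonneg (p - xb))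
      linarith only [neg_abs_le (⟪H k (xh k - p), p - xb⟫ : ℝ), habs, h2]
    have c3 : μ k * ⟪x k - xb, p - xb⟫ ≤ μ k * (‖x k - xb‖ * ‖p - xb‖) :=
      mul_le_mul_of_nonneg_left (real_inner_le_norm _ _) (hμpos k).le
    have c4 : -⟪evec, p - xb⟫ ≤ (L₂ * ‖x k - xb‖^2) * ‖p - xb‖ := by
      have habs := abs_real_inner_le_norm evec (p - xb)
      have h2 := mul_le_mul_of_nonneg_right hevb (norm_nonneg (p - xb))
      linarith only [neg_abs_le (⟪evec, p - xb⟫ : ℝ), habs, h2]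
    linarith only [h0, hq1, c1, c2, c3, c4]
  have hwlin : μ k * ‖p - xb‖ ≤ (L₁ + μ k + 1) * ‖xh k - p‖ + μ k * ‖x k - xb‖
      + L₂ * ‖x k - xb‖^2 := by
    rcases eq_or_lt_of_le (norm_nonneg (p - xb)) with hw0 | hw0
    · have h1 : μ k * ‖p - xb‖ = 0 := by rw [← hw0, mul_zero]
      rw [h1]
      have t1 : 0 ≤ (L₁ + μ k + 1) * ‖xh k - p‖ :=
        mul_nonneg (by linarith [hμpos k]) (norm_nonneg _)
      have t2 : 0 ≤ μ k * ‖x k - xb‖ := mul_nonneg (hμpos k).le hδnn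
      have t3 : 0 ≤ L₂ * ‖x k - xb‖^2 := mul_nonneg hL₂.le (sq_nonneg _)
      linarith only [t1, t2, t3]
    · refine le_of_mul_le_mul_right ?_ hw0
      calc μ k * ‖p - xb‖ * ‖p - xb‖ = μ k * ‖p - xb‖^2 := by ring
        _ ≤ _ := hIB
  -- bound on the step length
  have hrkkp : rk k (xh k) = ‖xh k - p‖ := by rw [hrk k (xh k), ← hd k, hp]
  have hrkk_b : ‖xh k - p‖ ≤ η * (r (x k))^((1:ℝ)+ρ) := by
    have h1 := hinex1 k
    rw [hrkkp] at h1
    have hmeq : min (r (x k)) ((r (x k))^((1:ℝ)+ρ)) = (r (x k))^((1:ℝ)+ρ) := by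
      apply min_eq_right
      calc (r (x k))^((1:ℝ)+ρ) ≤ (r (x k))^(1:ℝ) :=
            Real.rpow_le_rpow_of_exponent_ge ht ht1 (by linarith)
        _ = r (x k) := Real.rpow_one _
    rw [show (1 + ρ) = ((1:ℝ)+ρ) by norm_num] at h1
    rw [hmeq] at h1
    exact h1
  have hrkknn : (0:ℝ) ≤ ‖xh k - p‖ := norm_nonneg _
  have hddec : ‖d k‖ ≤ ‖xh k - p‖ + ‖p - xb‖ + ‖x k - xb‖ := by
    have he : d k = (xh k - p) + ((p - xb) + (xb - x k)) := by rw [hd k]; abel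
    calc ‖d k‖ = ‖(xh k - p) + ((p - xb) + (xb - x k))‖ := by rw [← he]
      _ ≤ ‖xh k - p‖ + ‖(p - xb) + (xb - x k)‖ := norm_add_le _ _
      _ ≤ ‖xh k - p‖ + (‖p - xb‖ + ‖xb - x k‖) := by
          linarith only [norm_add_le (p - xb) (xb - x k)]
      _ = ‖xh k - p‖ + ‖p - xb‖ + ‖x k - xb‖ := by rw [norm_sub_rev xb (x k)]; ring
  have hμlec : μ k ≤ c := by
    rw [hμ k]
    calc c * (r (x k))^ρ ≤ c * 1 :=
          mul_le_mul_of_nonneg_left (Real.rpow_le_one ht.le ht1 hρ0) hc.le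
      _ = c := mul_one c
  have hμd : μ k * ‖d k‖ ≤ (L₁ + 2*μ k + 1) * ‖xh k - p‖ + 2*(μ k * ‖x k - xb‖)
      + L₂ * ‖x k - xb‖^2 := by
    have h1 : μ k * ‖d k‖ ≤ μ k * (‖xh k - p‖ + ‖p - xb‖ + ‖x k - xb‖) :=
      mul_le_mul_of_nonneg_left hddec (hμpos k).le
    linarith only [h1, hwlin]
  -- numeric bound: μ‖d‖ ≤ C₅ t^{1+ρ} + L₂ κ² t²
  have hrpow1 : (r (x k))^((1:ℝ)+ρ) = r (x k) * (r (x k))^ρ := by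
    rw [Real.rpow_add ht, Real.rpow_one]
  have hstep1 : μ k * ‖d k‖ ≤ C₅ * (r (x k))^((1:ℝ)+ρ) + L₂*κ^2*(r (x k))^2 := by
    have hT1 : (L₁ + 2*μ k + 1) * ‖xh k - p‖ ≤ (L₁ + 2*c + 1) * (η * (r (x k))^((1:ℝ)+ρ)) := by
      apply mul_le_mul (by linarith [hμlec]) hrkk_b hrkknn (by linarith)
    have hT2 : 2*(μ k * ‖x k - xb‖) ≤ 2*((c * (r (x k))^ρ) * (κ * r (x k))) := by
      have := mul_le_mul_of_nonneg_left hδn (by positivity : (0:ℝ) ≤ c * (r (x k))^ρ)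
      rw [hμ k]
      linarith only [this]
    have hT3 : L₂ * ‖x k - xb‖^2 ≤ L₂ * (κ * r (x k))^2 := by
      apply mul_le_mul_of_nonneg_left _ hL₂.le
      exact pow_le_pow_left₀ hδnn hδn 2
    have heq : (L₁ + 2*c + 1) * (η * (r (x k))^((1:ℝ)+ρ)) + 2*((c * (r (x k))^ρ) * (κ * r (x k)))
        + L₂ * (κ * r (x k))^2 = C₅ * (r (x k))^((1:ℝ)+ρ) + L₂*κ^2*(r (x k))^2 := by
      rw [hC₅, hrpow1]
      ring
    linarith only [hμd, hT1, hT2, hT3, heq.le, heq.ge]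
  -- conclude 2 L₂ ‖d‖ ≤ μ k
  have hXv : (0:ℝ) ≤ (r (x k))^ρ * (r (x k))^ρ :=
    mul_nonneg (Real.rpow_pos_of_pos ht ρ).le (Real.rpow_pos_of_pos ht ρ).le
  have h1mρ : (0:ℝ) ≤ (r (x k))^((1:ℝ)-ρ) := (Real.rpow_pos_of_pos ht _).le
  have haux1 : (r (x k))^((1:ℝ)+ρ) = ((r (x k))^ρ * (r (x k))^ρ) * (r (x k))^((1:ℝ)-ρ) := by
    rw [← Real.rpow_add ht, ← Real.rpow_add ht]
    congr 1
    ring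
  have haux2 : (r (x k))^2 ≤ ((r (x k))^ρ * (r (x k))^ρ) * (r (x k))^((1:ℝ)-ρ) := by
    have he : (r (x k))^2 = (((r (x k))^ρ * (r (x k))^ρ) * (r (x k))^((1:ℝ)-ρ))
        * (r (x k))^((1:ℝ)-ρ) := by
      rw [← Real.rpow_add ht, ← Real.rpow_add ht, ← Real.rpow_add ht,
        show ρ + ρ + ((1:ℝ)-ρ) + ((1:ℝ)-ρ) = ((2:ℕ):ℝ) by push_cast; ring,
        Real.rpow_natCast]
    rw [he]
    have hle1 : (r (x k))^((1:ℝ)-ρ) ≤ 1 := Real.rpow_le_one ht.le ht1 (by linarith)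
    have hY : 0 ≤ ((r (x k))^ρ * (r (x k))^ρ) * (r (x k))^((1:ℝ)-ρ) := mul_nonneg hXv h1mρ
    calc (((r (x k))^ρ * (r (x k))^ρ) * (r (x k))^((1:ℝ)-ρ)) * (r (x k))^((1:ℝ)-ρ)
        ≤ (((r (x k))^ρ * (r (x k))^ρ) * (r (x k))^((1:ℝ)-ρ)) * 1 :=
          mul_le_mul_of_nonneg_left hle1 hY
      _ = _ := mul_one _
  have hT1ρ : (r (x k))^((1:ℝ)-ρ) ≤ c^2/C₆ := by
    have h1 := Real.rpow_le_rpow ht.le htT (by linarith : (0:ℝ) ≤ 1-ρ)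
    rwa [hT, Real.rpow_inv_rpow (le_of_lt (div_pos (by positivity) hC₆pos))
      (by linarith : (1:ℝ)-ρ ≠ 0)] at h1
  have hstep2 : 2*L₂*(μ k * ‖d k‖) ≤ c^2 * ((r (x k))^ρ * (r (x k))^ρ) := by
    have h1 : 2*L₂*(μ k * ‖d k‖) ≤ 2*L₂*(C₅ * (r (x k))^((1:ℝ)+ρ) + L₂*κ^2*(r (x k))^2) :=
      mul_le_mul_of_nonneg_left hstep1 (by linarith)
    have h2 : L₂*κ^2*(r (x k))^2 ≤ L₂*κ^2*(((r (x k))^ρ * (r (x k))^ρ) * (r (x k))^((1:ℝ)-ρ)) :=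
      mul_le_mul_of_nonneg_left haux2 (by positivity)
    have h3 : 2*L₂*(C₅ * (r (x k))^((1:ℝ)+ρ) + L₂*κ^2*(r (x k))^2)
        ≤ C₆ * (((r (x k))^ρ * (r (x k))^ρ) * (r (x k))^((1:ℝ)-ρ)) := by
      rw [hC₆, haux1]
      have h2' := mul_le_mul_of_nonneg_left h2 (by linarith : (0:ℝ) ≤ 2*L₂)
      linarith only [h2']
    have h4 : C₆ * (((r (x k))^ρ * (r (x k))^ρ) * (r (x k))^((1:ℝ)-ρ))
        ≤ C₆ * (((r (x k))^ρ * (r (x k))^ρ) * (c^2/C₆)) := by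
      apply mul_le_mul_of_nonneg_left _ hC₆pos.le
      exact mul_le_mul_of_nonneg_left hT1ρ hXv
    have h5 : C₆ * (((r (x k))^ρ * (r (x k))^ρ) * (c^2/C₆))
        = c^2 * ((r (x k))^ρ * (r (x k))^ρ) := by
      field_simp
    linarith only [h1, h3, h4, h5.le, h5.ge]
  have hdb : 2*L₂*‖d k‖ ≤ μ k := by
    have hμsq : μ k * μ k = c^2 * ((r (x k))^ρ * (r (x k))^ρ) := by rw [hμ k]; ring
    have h1 : μ k * (2*L₂*‖d k‖) ≤ μ k * μ k := by
      rw [hμsq]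
      calc μ k * (2*L₂*‖d k‖) = 2*L₂*(μ k * ‖d k‖) := by ring
        _ ≤ c^2 * ((r (x k))^ρ * (r (x k))^ρ) := hstep2
    exact le_of_mul_le_mul_left h1 (hμpos k)
  -- acceptance of the unit step
  have hxd : x k + d k = xh k := by rw [hd k]; abel
  have hcub := taylor_cubic hgrad hhess hlip2 hL₂.le (x k) (d k)
  rw [hxd] at hcub
  have hq2 := hinex2 k
  rw [hqx, hqxh] at hq2
  have hHdd : ⟪H k (d k), d k⟫ = ⟪hess (x k) (d k), d k⟫ + μ k * ‖d k‖^2 := by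
    rw [hH k]
    simp only [ContinuousLinearMap.add_apply, ContinuousLinearMap.smul_apply,
      ContinuousLinearMap.id_apply, inner_add_left, real_inner_smul_left,
      real_inner_self_eq_norm_sq]
  have hℓdiff : ℓ k (xh k) - ℓ k (x k) = ⟪f' (x k), d k⟫ + g (xh k) - g (x k) := by
    rw [hℓ k (xh k), hℓx k, ← hd k]
    ring
  have hℓneg : ℓ k (xh k) - ℓ k (x k) ≤ 0 := by
    have := hD0 k
    rw [hDdef k] at this
    linarith
  have hLd : L₂*‖d k‖^3 ≤ (μ k/2)*‖d k‖^2 := by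
    have he : L₂*‖d k‖^3 = (L₂*‖d k‖)*‖d k‖^2 := by ring
    rw [he]
    exact mul_le_mul_of_nonneg_right (by linarith only [hdb]) (sq_nonneg _)
  have hFxh : F (xh k) - F (x k) ≤ ζ * (ℓ k (xh k) - ℓ k (x k)) - (μ k/2)*‖d k‖^2
      + L₂*‖d k‖^3 := by
    rw [hF, hF]
    linarith only [hcub, hq2, hHdd.le, hHdd.ge, hℓdiff.le, hℓdiff.ge]
  have hζθ' : ζ * (ℓ k (xh k) - ℓ k (x k)) ≤ θ * (ℓ k (xh k) - ℓ k (x k)) := by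
    have h1 := mul_nonneg (by linarith : (0:ℝ) ≤ ζ-θ)
      (by linarith only [hℓneg] : (0:ℝ) ≤ -(ℓ k (xh k) - ℓ k (x k)))
    linarith only [h1]
  have hacc0 : F (x k) - F (x k + β^(0:ℕ) • d k) ≥
      θ * (ℓ k (x k) - ℓ k (x k + β^(0:ℕ) • d k)) := by
    rw [pow_zero, one_smul, hxd]
    linarith only [hFxh, hLd, hζθ']
  have hik : i k = 0 := by
    by_contra hne
    exact hmin k 0 (Nat.pos_of_ne_zero hne) hacc0
  rw [hα k, hik, pow_zero]
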